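/- arXiv:1201.0141 — 6 statements merged into one kernel-verified Lean document; each statement's English description precedes it below -/
import Mathlib

section
/- For every integer n ≥ 2 and t > 0, the function p_{2^n}(x,t) = (t(x²+t²)/(2^{n-2}π)) · Σ_{k odd, 1 ≤ k ≤ 2^{n-1}-1} cos(kπ/2^n)/(x⁴+t⁴+2x²t²cos(kπ/2^{n-1})) satisfies ∫_{-∞}^{∞} p_{2^n}(x,t) dx = 1. -/
open MeasureTheory Real

lemma intA_integrable (a b : ℝ) (hb : 0 < b) :
    Integrable (fun x : ℝ => ((x - a) ^ 2 + b ^ 2)⁻¹) := by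
  have h1 : Integrable (fun x : ℝ => (1 + (b⁻¹ * x) ^ 2)⁻¹) :=
    integrable_inv_one_add_sq.comp_mul_left' (inv_ne_zero hb.ne')
  have h2 : Integrable (fun x : ℝ => (x ^ 2 + b ^ 2)⁻¹) := by
    have := (h1.const_mul (b ^ 2)⁻¹)
    refine this.congr (Filter.Eventually.of_forall fun x => ?_)
    field_simp
    ring
  exact h2.comp_sub_right a

lemma intA_eq (a b : ℝ) (hb : 0 < b) :
    ∫ x : ℝ, ((x - a) ^ 2 + b ^ 2)⁻¹ = π / b := by
  have h0 : ∫ x : ℝ, ((x - a) ^ 2 + b ^ 2)⁻¹ = ∫ x : ℝ, (x ^ 2 + b ^ 2)⁻¹ :=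
    integral_sub_right_eq_self (fun x : ℝ => (x ^ 2 + b ^ 2)⁻¹) a
  rw [h0]
  have h1 : (fun x : ℝ => (x ^ 2 + b ^ 2)⁻¹)
      = fun x : ℝ => (b ^ 2)⁻¹ * (1 + (x / b) ^ 2)⁻¹ := by
    funext x; field_simp; ring
  rw [h1, integral_const_mul,
    MeasureTheory.Measure.integral_comp_div (fun y : ℝ => (1 + y ^ 2)⁻¹) b,
    integral_univ_inv_one_add_sq, abs_of_pos hb, smul_eq_mul]
  field_simp

lemma denom_pos (t θ x : ℝ) (ht : 0 < t) (hc : 0 < Real.cos θ) :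
    x ^ 4 + t ^ 4 + 2 * x ^ 2 * t ^ 2 * Real.cos (2 * θ)
      = ((x - t * Real.sin θ) ^ 2 + (t * Real.cos θ) ^ 2)
        * ((x + t * Real.sin θ) ^ 2 + (t * Real.cos θ) ^ 2) := by
  rw [Real.cos_two_mul]
  have h := Real.sin_sq_add_cos_sq θ
  linear_combination (2*x^2*t^2 - t^4*(1 + Real.sin θ^2 + Real.cos θ^2)) * h

lemma key (t θ : ℝ) (ht : 0 < t) (hc : 0 < Real.cos θ) :
    Integrable (fun x : ℝ =>
      t * (x ^ 2 + t ^ 2) * Real.cos θ / (x ^ 4 + t ^ 4 + 2 * x ^ 2 * t ^ 2 * Real.cos (2 * θ)))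
    ∧ ∫ x : ℝ,
      t * (x ^ 2 + t ^ 2) * Real.cos θ / (x ^ 4 + t ^ 4 + 2 * x ^ 2 * t ^ 2 * Real.cos (2 * θ))
      = π := by
  set s := Real.sin θ
  set c := Real.cos θ
  have htc : 0 < t * c := mul_pos ht hc
  have hA : ∀ x : ℝ, (0:ℝ) < (x - t * s) ^ 2 + (t * c) ^ 2 :=
    fun x => by positivity
  have hB : ∀ x : ℝ, (0:ℝ) < (x + t * s) ^ 2 + (t * c) ^ 2 :=
    fun x => by positivity
  have hfun : ∀ x : ℝ,
      t * (x ^ 2 + t ^ 2) * c / (x ^ 4 + t ^ 4 + 2 * x ^ 2 * t ^ 2 * Real.cos (2 * θ))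
      = (t * c / 2) * (((x - t * s) ^ 2 + (t * c) ^ 2)⁻¹ + ((x + t * s) ^ 2 + (t * c) ^ 2)⁻¹) := by
    intro x
    have h := Real.sin_sq_add_cos_sq θ
    have hAB : ((x - t * s) ^ 2 + (t * c) ^ 2) + ((x + t * s) ^ 2 + (t * c) ^ 2)
        = 2 * (x ^ 2 + t ^ 2) := by linear_combination (2 * t ^ 2) * h
    rw [denom_pos t θ x ht hc, inv_add_inv (hA x).ne' (hB x).ne', hAB, mul_div_assoc]
    ring
  have hint : Integrable (fun x : ℝ =>
      (t * c / 2) * (((x - t * s) ^ 2 + (t * c) ^ 2)⁻¹ + ((x + t * s) ^ 2 + (t * c) ^ 2)⁻¹)) := by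
    refine Integrable.const_mul ?_ _
    have h1 := intA_integrable (t * s) (t * c) htc
    have h2 := intA_integrable (-(t * s)) (t * c) htc
    have h2' : Integrable (fun x : ℝ => ((x + t * s) ^ 2 + (t * c) ^ 2)⁻¹) := by
      refine h2.congr (Filter.Eventually.of_forall fun x => ?_)
      ring_nf
    exact h1.add h2'
  constructor
  · exact hint.congr (Filter.Eventually.of_forall fun x => (hfun x).symm)
  · rw [MeasureTheory.integral_congr_ae (Filter.Eventually.of_forall hfun)]
    rw [MeasureTheory.integral_const_mul]
    have h1 := intA_integrable (t * s) (t * c) htc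
    have h2' : Integrable (fun x : ℝ => ((x + t * s) ^ 2 + (t * c) ^ 2)⁻¹) := by
      refine (intA_integrable (-(t * s)) (t * c) htc).congr
        (Filter.Eventually.of_forall fun x => ?_)
      ring_nf
    rw [MeasureTheory.integral_add h1 h2']
    have e1 := intA_eq (t * s) (t * c) htc
    have e2 : ∫ x : ℝ, ((x + t * s) ^ 2 + (t * c) ^ 2)⁻¹ = π / (t * c) := by
      rw [show (fun x : ℝ => ((x + t * s) ^ 2 + (t * c) ^ 2)⁻¹)
          = (fun x : ℝ => ((x - -(t * s)) ^ 2 + (t * c) ^ 2)⁻¹) by funext x; ring_nf]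
      exact intA_eq (-(t * s)) (t * c) htc
    rw [e1, e2]
    field_simp
    ring

lemma card_odd (m : ℕ) :
    ((Finset.Icc (1 : ℕ) (2 ^ (m + 1) - 1)).filter (fun k => Odd k)).card = 2 ^ m := by
  have h2 : 2 ^ (m + 1) = 2 * 2 ^ m := by ring
  have himg : (Finset.Icc (1 : ℕ) (2 ^ (m + 1) - 1)).filter (fun k => Odd k)
      = (Finset.range (2 ^ m)).image (fun i => 2 * i + 1) := by
    ext k
    simp only [Finset.mem_filter, Finset.mem_Icc, Finset.mem_image, Finset.mem_range]
    constructor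
    · rintro ⟨⟨hk1, hk2⟩, r, hr⟩
      exact ⟨r, by omega, by omega⟩
    · rintro ⟨i, hi, rfl⟩
      exact ⟨⟨by omega, by omega⟩, i, by omega⟩
  rw [himg, Finset.card_image_of_injective _ (fun a b hab => by omega), Finset.card_range]

theorem stmt_3 (n : ℕ) (hn : 2 ≤ n) (t : ℝ) (ht : 0 < t) :
    ∫ x : ℝ, (t * (x ^ 2 + t ^ 2) / (2 ^ (n - 2) * Real.pi)) *
      ∑ k ∈ (Finset.Icc (1 : ℕ) (2 ^ (n - 1) - 1)).filter (fun k => Odd k),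
        Real.cos ((k : ℝ) * Real.pi / 2 ^ n) /
          (x ^ 4 + t ^ 4 + 2 * x ^ 2 * t ^ 2 * Real.cos ((k : ℝ) * Real.pi / 2 ^ (n - 1)))
    = 1 := by
  obtain ⟨m, rfl⟩ : ∃ m, n = m + 2 := ⟨n - 2, by omega⟩
  have hπ := Real.pi_pos
  have hm1 : m + 2 - 1 = m + 1 := by omega
  have hm2 : m + 2 - 2 = m := by omega
  rw [hm1, hm2]
  set S := (Finset.Icc (1 : ℕ) (2 ^ (m + 1) - 1)).filter (fun k => Odd k) with hS
  -- facts about each k in S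
  have hkey : ∀ k ∈ S, 0 < Real.cos ((k : ℝ) * Real.pi / 2 ^ (m + 2)) ∧
      (k : ℝ) * Real.pi / 2 ^ (m + 1) = 2 * ((k : ℝ) * Real.pi / 2 ^ (m + 2)) := by
    intro k hk
    rw [hS, Finset.mem_filter, Finset.mem_Icc] at hk
    obtain ⟨⟨hk1, hk2⟩, -⟩ := hk
    have hkR : (k : ℝ) < 2 ^ (m + 1) := by
      have : k < 2 ^ (m + 1) := by
        have : 0 < 2 ^ (m + 1) := Nat.pow_pos (by norm_num)
        omega
      exact_mod_cast this
    have hθpos : 0 < (k : ℝ) * Real.pi / 2 ^ (m + 2) := by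
      apply div_pos (mul_pos (by exact_mod_cast hk1) hπ) (by positivity)
    have hθlt : (k : ℝ) * Real.pi / 2 ^ (m + 2) < Real.pi / 2 := by
      rw [div_lt_div_iff₀ (by positivity) (by norm_num)]
      have h2 : (2 : ℝ) ^ (m + 2) = 2 ^ (m + 1) * 2 := by ring
      calc (k : ℝ) * Real.pi * 2 < 2 ^ (m + 1) * Real.pi * 2 := by
            have := mul_lt_mul_of_pos_right (mul_lt_mul_of_pos_right hkR hπ) (by norm_num : (0:ℝ) < 2)
            linarith
        _ = Real.pi * 2 ^ (m + 2) := by rw [h2]; ring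
    refine ⟨Real.cos_pos_of_mem_Ioo ⟨by linarith, hθlt⟩, ?_⟩
    have h2 : (2 : ℝ) ^ (m + 2) = 2 * 2 ^ (m + 1) := by ring
    rw [h2]
    field_simp
  -- integrand as a sum
  have hrw : ∀ x : ℝ, (t * (x ^ 2 + t ^ 2) / (2 ^ m * Real.pi)) *
      ∑ k ∈ S, Real.cos ((k : ℝ) * Real.pi / 2 ^ (m + 2)) /
        (x ^ 4 + t ^ 4 + 2 * x ^ 2 * t ^ 2 * Real.cos ((k : ℝ) * Real.pi / 2 ^ (m + 1)))
      = ∑ k ∈ S, (2 ^ m * Real.pi)⁻¹ *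
        (t * (x ^ 2 + t ^ 2) * Real.cos ((k : ℝ) * Real.pi / 2 ^ (m + 2)) /
          (x ^ 4 + t ^ 4 + 2 * x ^ 2 * t ^ 2 *
            Real.cos (2 * ((k : ℝ) * Real.pi / 2 ^ (m + 2))))) := by
    intro x
    rw [Finset.mul_sum]
    refine Finset.sum_congr rfl fun k hk => ?_
    rw [(hkey k hk).2]
    field_simp
  rw [MeasureTheory.integral_congr_ae (Filter.Eventually.of_forall hrw)]
  rw [MeasureTheory.integral_finset_sum]
  · have : ∀ k ∈ S, ∫ x : ℝ, (2 ^ m * Real.pi)⁻¹ *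
        (t * (x ^ 2 + t ^ 2) * Real.cos ((k : ℝ) * Real.pi / 2 ^ (m + 2)) /
          (x ^ 4 + t ^ 4 + 2 * x ^ 2 * t ^ 2 *
            Real.cos (2 * ((k : ℝ) * Real.pi / 2 ^ (m + 2)))))
        = ((2 : ℝ) ^ m)⁻¹ := by
      intro k hk
      rw [MeasureTheory.integral_const_mul,
        (key t ((k : ℝ) * Real.pi / 2 ^ (m + 2)) ht (hkey k hk).1).2]
      field_simp
    rw [Finset.sum_congr rfl this, Finset.sum_const, card_odd m, nsmul_eq_mul]
    rw [Nat.cast_pow]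
    norm_num
  · intro k hk
    exact ((key t ((k : ℝ) * Real.pi / 2 ^ (m + 2)) ht (hkey k hk).1).1).const_mul _
end

section
/- For t > 0, the function p₄(x,t) = (t/(√2·π)) · (x²+t²)/(x⁴+t⁴) satisfies the fourth-order Laplace equation ∂⁴p₄/∂t⁴ + ∂⁴p₄/∂x⁴ = 0 for all x ∈ ℝ, t > 0. -/
lemma step (k a : ℝ) (m : ℕ) (N N' : ℝ → ℝ) (v : ℝ) (s : ℝ) (hs : a ^ 4 + s ^ 4 ≠ 0)
    (hN : HasDerivAt N v s)
    (hV : v * (a ^ 4 + s ^ 4) - ((m : ℝ) + 1) * (4 * s ^ 3) * N s = N' s) :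
    HasDerivAt (fun y : ℝ => k * (N y / (a ^ 4 + y ^ 4) ^ (m + 1)))
      (k * (N' s / (a ^ 4 + s ^ 4) ^ (m + 2))) s := by
  have h1 : HasDerivAt (fun y : ℝ => a ^ 4 + y ^ 4) (4 * s ^ 3) s := by
    simpa using (hasDerivAt_pow 4 s).const_add (a ^ 4)
  have hden : HasDerivAt (fun y : ℝ => (a ^ 4 + y ^ 4) ^ (m + 1))
      (((m : ℝ) + 1) * (a ^ 4 + s ^ 4) ^ m * (4 * s ^ 3)) s := by
    have h2 := h1.pow (m + 1)
    simp only [Nat.add_sub_cancel] at h2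
    push_cast at h2
    exact h2
  have h3 := (hN.div hden (pow_ne_zero _ hs)).const_mul k
  refine HasDerivAt.congr_deriv h3 ?_
  congr 1
  rw [div_eq_div_iff (pow_ne_zero _ (pow_ne_zero _ hs)) (pow_ne_zero _ hs)]
  rw [← hV]
  ring

lemma iter4 (a : ℝ) (f0 f1 f2 f3 f4 : ℝ → ℝ)
    (h0 : ∀ s, a ^ 4 + s ^ 4 ≠ 0 → HasDerivAt f0 (f1 s) s)
    (h1 : ∀ s, a ^ 4 + s ^ 4 ≠ 0 → HasDerivAt f1 (f2 s) s)
    (h2 : ∀ s, a ^ 4 + s ^ 4 ≠ 0 → HasDerivAt f2 (f3 s) s)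
    (h3 : ∀ s, a ^ 4 + s ^ 4 ≠ 0 → HasDerivAt f3 (f4 s) s)
    (t : ℝ) (ht : a ^ 4 + t ^ 4 ≠ 0) :
    iteratedDeriv 4 f0 t = f4 t := by
  have hU : IsOpen {s : ℝ | a ^ 4 + s ^ 4 ≠ 0} :=
    isOpen_ne_fun (by continuity) continuous_const
  have E1 : ∀ s, a ^ 4 + s ^ 4 ≠ 0 → deriv f0 s = f1 s := fun s hs => (h0 s hs).deriv
  have E2 : ∀ s, a ^ 4 + s ^ 4 ≠ 0 → deriv (deriv f0) s = f2 s := by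
    intro s hs
    have hev : deriv f0 =ᶠ[nhds s] f1 :=
      Filter.eventually_of_mem (hU.mem_nhds hs) fun y hy => E1 y hy
    rw [hev.deriv_eq]; exact (h1 s hs).deriv
  have E3 : ∀ s, a ^ 4 + s ^ 4 ≠ 0 → deriv (deriv (deriv f0)) s = f3 s := by
    intro s hs
    have hev : deriv (deriv f0) =ᶠ[nhds s] f2 :=
      Filter.eventually_of_mem (hU.mem_nhds hs) fun y hy => E2 y hy
    rw [hev.deriv_eq]; exact (h2 s hs).deriv
  have E4 : ∀ s, a ^ 4 + s ^ 4 ≠ 0 → deriv (deriv (deriv (deriv f0))) s = f4 s := by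
    intro s hs
    have hev : deriv (deriv (deriv f0)) =ᶠ[nhds s] f3 :=
      Filter.eventually_of_mem (hU.mem_nhds hs) fun y hy => E3 y hy
    rw [hev.deriv_eq]; exact (h3 s hs).deriv
  rw [show (4 : ℕ) = 3 + 1 from rfl, iteratedDeriv_succ,
    show (3 : ℕ) = 2 + 1 from rfl, iteratedDeriv_succ,
    show (2 : ℕ) = 1 + 1 from rfl, iteratedDeriv_succ,
    iteratedDeriv_one]
  exact E4 t ht

lemma chain1 (k x u : ℝ) (hu : x ^ 4 + u ^ 4 ≠ 0) :
    iteratedDeriv 4 (fun y : ℝ => k * ((((1 : ℝ) * x ^ 2) * y ^ 1 + ((1 : ℝ) * x ^ 0) * y ^ 3) / (x ^ 4 + y ^ 4) ^ 1)) u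
      = k * ((((-120 : ℝ) * x ^ 14) * u ^ 1 + ((-840 : ℝ) * x ^ 12) * u ^ 3 + ((2424 : ℝ) * x ^ 10) * u ^ 5 + ((3720 : ℝ) * x ^ 8) * u ^ 7 + ((-3240 : ℝ) * x ^ 6) * u ^ 9 + ((-1560 : ℝ) * x ^ 4) * u ^ 11 + ((360 : ℝ) * x ^ 2) * u ^ 13 + ((24 : ℝ) * x ^ 0) * u ^ 15) / (x ^ 4 + u ^ 4) ^ 5) := by
  refine iter4 x _ (fun y : ℝ => k * ((((1 : ℝ) * x ^ 6) * y ^ 0 + ((3 : ℝ) * x ^ 4) * y ^ 2 + ((-3 : ℝ) * x ^ 2) * y ^ 4 + ((-1 : ℝ) * x ^ 0) * y ^ 6) / (x ^ 4 + y ^ 4) ^ 2)) (fun y : ℝ => k * ((((6 : ℝ) * x ^ 8) * y ^ 1 + ((-20 : ℝ) * x ^ 6) * y ^ 3 + ((-24 : ℝ) * x ^ 4) * y ^ 5 + ((12 : ℝ) * x ^ 2) * y ^ 7 + ((2 : ℝ) * x ^ 0) * y ^ 9) / (x ^ 4 + y ^ 4) ^ 3)) (fun y : ℝ => k * ((((6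 : ℝ) * x ^ 12) * y ^ 0 + ((-60 : ℝ) * x ^ 10) * y ^ 2 + ((-186 : ℝ) * x ^ 8) * y ^ 4 + ((264 : ℝ) * x ^ 6) * y ^ 6 + ((186 : ℝ) * x ^ 4) * y ^ 8 + ((-60 : ℝ) * x ^ 2) * y ^ 10 + ((-6 : ℝ) * x ^ 0) * y ^ 12) / (x ^ 4 + y ^ 4) ^ 4)) (fun y : ℝ => k * ((((-120 : ℝ) * x ^ 14) * y ^ 1 + ((-840 : ℝ) * x ^ 12) * y ^ 3 + ((2424 : ℝ) * x ^ 10) * y ^ 5 + ((3720 : ℝ) * x ^ 8) * y ^ 7 + ((-3240 : ℝ) * x ^ 6) * y ^ 9 + ((-1560 : ℝ) * x ^ 4) * y ^ 11 + ((360 : ℝ) * x ^ 2) * y ^ 13 + ((24 : ℝ) * x ^ 0) * y ^ 15) / (x ^ 4 + y ^ 4) ^ 5)) ?_ ?_ ?_ ?_ u hu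
  · intro s hs
    exact step k x 0 _ (fun y : ℝ => ((1 : ℝ) * x ^ 6) * y ^ 0 + ((3 : ℝ) * x ^ 4) * y ^ 2 + ((-3 : ℝ) * x ^ 2) * y ^ 4 + ((-1 : ℝ) * x ^ 0) * y ^ 6) _ s hs (((hasDerivAt_pow 1 s).const_mul ((1 : ℝ) * x ^ 2)).add ((hasDerivAt_pow 3 s).const_mul ((1 : ℝ) * x ^ 0))) (by push_cast; ring)
  · intro s hs
    exact step k x 1 _ (fun y : ℝ => ((6 : ℝ) * x ^ 8) * y ^ 1 + ((-20 : ℝ) * x ^ 6) * y ^ 3 + ((-24 : ℝ) * x ^ 4) * y ^ 5 + ((12 : ℝ) * x ^ 2) * y ^ 7 + ((2 : ℝ) * x ^ 0) * y ^ 9) _ s hs (((((hasDerivAt_pow 0 s).const_mul ((1 : ℝ) * x ^ 6)).add ((hasDerivAt_pow 2 s).const_mul ((3 : ℝ) * x ^ 4))).add ((hasDerivAt_pow 4 s).const_mul ((-3 : ℝ) * x ^ 2))).add ((hasDerivAt_pow 6 s).const_mul ((-1 : ℝ) * x ^ 0))) (by push_cast; ring)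
  · intro s hs
    exact step k x 2 _ (fun y : ℝ => ((6 : ℝ) * x ^ 12) * y ^ 0 + ((-60 : ℝ) * x ^ 10) * y ^ 2 + ((-186 : ℝ) * x ^ 8) * y ^ 4 + ((264 : ℝ) * x ^ 6) * y ^ 6 + ((186 : ℝ) * x ^ 4) * y ^ 8 + ((-60 : ℝ) * x ^ 2) * y ^ 10 + ((-6 : ℝ) * x ^ 0) * y ^ 12) _ s hs ((((((hasDerivAt_pow 1 s).const_mul ((6 : ℝ) * x ^ 8)).add ((hasDerivAt_pow 3 s).const_mul ((-20 : ℝ) * x ^ 6))).add ((hasDerivAt_pow 5 s).const_mul ((-24 : ℝ) * x ^ 4))).add ((hasDerivAt_pow 7 s).const_mul ((12 : ℝ) * x ^ 2))).add ((hasDerivAt_pow 9 s).const_mul ((2 : ℝ) * x ^ 0))) (by push_cast; ring)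
  · intro s hs
    exact step k x 3 _ (fun y : ℝ => ((-120 : ℝ) * x ^ 14) * y ^ 1 + ((-840 : ℝ) * x ^ 12) * y ^ 3 + ((2424 : ℝ) * x ^ 10) * y ^ 5 + ((3720 : ℝ) * x ^ 8) * y ^ 7 + ((-3240 : ℝ) * x ^ 6) * y ^ 9 + ((-1560 : ℝ) * x ^ 4) * y ^ 11 + ((360 : ℝ) * x ^ 2) * y ^ 13 + ((24 : ℝ) * x ^ 0) * y ^ 15) _ s hs ((((((((hasDerivAt_pow 0 s).const_mul ((6 : ℝ) * x ^ 12)).add ((hasDerivAt_pow 2 s).const_mul ((-60 : ℝ) * x ^ 10))).add ((hasDerivAt_pow 4 s).const_mul ((-186 : ℝ) * x ^ 8))).add ((hasDerivAt_pow 6 s).const_mul ((264 : ℝ) * x ^ 6))).add ((hasDerivAt_pow 8 s).const_mul ((186 : ℝ) * x ^ 4))).add ((hasDerivAt_pow 10 s).const_mul ((-60 : ℝ) * x ^ 2))).add ((hasDerivAt_pow 12 s).const_mul ((-6 : ℝ) * x ^ 0))) (by push_cast; ring)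

lemma chain2 (k t u : ℝ) (hu : t ^ 4 + u ^ 4 ≠ 0) :
    iteratedDeriv 4 (fun y : ℝ => k * ((((1 : ℝ) * t ^ 3) * y ^ 0 + ((1 : ℝ) * t ^ 1) * y ^ 2) / (t ^ 4 + y ^ 4) ^ 1)) u
      = k * ((((-24 : ℝ) * t ^ 15) * u ^ 0 + ((-360 : ℝ) * t ^ 13) * u ^ 2 + ((1560 : ℝ) * t ^ 11) * u ^ 4 + ((3240 : ℝ) * t ^ 9) * u ^ 6 + ((-3720 : ℝ) * t ^ 7) * u ^ 8 + ((-2424 : ℝ) * t ^ 5) * u ^ 10 + ((840 : ℝ) * t ^ 3) * u ^ 12 + ((120 : ℝ) * t ^ 1) * u ^ 14) / (t ^ 4 + u ^ 4) ^ 5) := by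
  refine iter4 t _ (fun y : ℝ => k * ((((2 : ℝ) * t ^ 5) * y ^ 1 + ((-4 : ℝ) * t ^ 3) * y ^ 3 + ((-2 : ℝ) * t ^ 1) * y ^ 5) / (t ^ 4 + y ^ 4) ^ 2)) (fun y : ℝ => k * ((((2 : ℝ) * t ^ 9) * y ^ 0 + ((-12 : ℝ) * t ^ 7) * y ^ 2 + ((-24 : ℝ) * t ^ 5) * y ^ 4 + ((20 : ℝ) * t ^ 3) * y ^ 6 + ((6 : ℝ) * t ^ 1) * y ^ 8) / (t ^ 4 + y ^ 4) ^ 3)) (fun y : ℝ => k * ((((-24 : ℝ) * t ^ 11) * y ^ 1 + ((-120 : ℝ) * t ^ 9) * y ^ 3 + ((240 : ℝ) * t ^ 7) * y ^ 5 + ((240 : ℝ) * t ^ 5) * y ^ 7 + ((-120 : ℝ) * t ^ 3) * y ^ 9 + ((-24 : ℝ) * t ^ 1) * y ^ 11) / (t ^ 4 + y ^ 4) ^ 4)) (fun y : ℝ => k * ((((-24 : ℝ) * t ^ 15) * y ^ 0 + ((-360 : ℝ) * t ^ 13) * y ^ 2 + ((1560 : ℝ) * t ^ 11) * y ^ 4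 + ((3240 : ℝ) * t ^ 9) * y ^ 6 + ((-3720 : ℝ) * t ^ 7) * y ^ 8 + ((-2424 : ℝ) * t ^ 5) * y ^ 10 + ((840 : ℝ) * t ^ 3) * y ^ 12 + ((120 : ℝ) * t ^ 1) * y ^ 14) / (t ^ 4 + y ^ 4) ^ 5)) ?_ ?_ ?_ ?_ u hu
  · intro s hs
    exact step k t 0 _ (fun y : ℝ => ((2 : ℝ) * t ^ 5) * y ^ 1 + ((-4 : ℝ) * t ^ 3) * y ^ 3 + ((-2 : ℝ) * t ^ 1) * y ^ 5) _ s hs (((hasDerivAt_pow 0 s).const_mul ((1 : ℝ) * t ^ 3)).add ((hasDerivAt_pow 2 s).const_mul ((1 : ℝ) * t ^ 1))) (by push_cast; ring)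
  · intro s hs
    exact step k t 1 _ (fun y : ℝ => ((2 : ℝ) * t ^ 9) * y ^ 0 + ((-12 : ℝ) * t ^ 7) * y ^ 2 + ((-24 : ℝ) * t ^ 5) * y ^ 4 + ((20 : ℝ) * t ^ 3) * y ^ 6 + ((6 : ℝ) * t ^ 1) * y ^ 8) _ s hs ((((hasDerivAt_pow 1 s).const_mul ((2 : ℝ) * t ^ 5)).add ((hasDerivAt_pow 3 s).const_mul ((-4 : ℝ) * t ^ 3))).add ((hasDerivAt_pow 5 s).const_mul ((-2 : ℝ) * t ^ 1))) (by push_cast; ring)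
  · intro s hs
    exact step k t 2 _ (fun y : ℝ => ((-24 : ℝ) * t ^ 11) * y ^ 1 + ((-120 : ℝ) * t ^ 9) * y ^ 3 + ((240 : ℝ) * t ^ 7) * y ^ 5 + ((240 : ℝ) * t ^ 5) * y ^ 7 + ((-120 : ℝ) * t ^ 3) * y ^ 9 + ((-24 : ℝ) * t ^ 1) * y ^ 11) _ s hs ((((((hasDerivAt_pow 0 s).const_mul ((2 : ℝ) * t ^ 9)).add ((hasDerivAt_pow 2 s).const_mul ((-12 : ℝ) * t ^ 7))).add ((hasDerivAt_pow 4 s).const_mul ((-24 : ℝ) * t ^ 5))).add ((hasDerivAt_pow 6 s).const_mul ((20 : ℝ) * t ^ 3))).add ((hasDerivAt_pow 8 s).const_mul ((6 : ℝ) * t ^ 1))) (by push_cast; ring)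
  · intro s hs
    exact step k t 3 _ (fun y : ℝ => ((-24 : ℝ) * t ^ 15) * y ^ 0 + ((-360 : ℝ) * t ^ 13) * y ^ 2 + ((1560 : ℝ) * t ^ 11) * y ^ 4 + ((3240 : ℝ) * t ^ 9) * y ^ 6 + ((-3720 : ℝ) * t ^ 7) * y ^ 8 + ((-2424 : ℝ) * t ^ 5) * y ^ 10 + ((840 : ℝ) * t ^ 3) * y ^ 12 + ((120 : ℝ) * t ^ 1) * y ^ 14) _ s hs (((((((hasDerivAt_pow 1 s).const_mul ((-24 : ℝ) * t ^ 11)).add ((hasDerivAt_pow 3 s).const_mul ((-120 : ℝ) * t ^ 9))).add ((hasDerivAt_pow 5 s).const_mul ((240 : ℝ) * t ^ 7))).add ((hasDerivAt_pow 7 s).const_mul ((240 : ℝ) * t ^ 5))).add ((hasDerivAt_pow 9 s).const_mul ((-120 : ℝ) * t ^ 3))).add ((hasDerivAt_pow 11 s).const_mul ((-24 : ℝ) * t ^ 1))) (by push_cast; ring)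

theorem stmt_4 (x t : ℝ) (ht : 0 < t) :
    iteratedDeriv 4 (fun s : ℝ => s / (Real.sqrt 2 * Real.pi) * (x ^ 2 + s ^ 2) / (x ^ 4 + s ^ 4)) t
      + iteratedDeriv 4 (fun y : ℝ => t / (Real.sqrt 2 * Real.pi) * (y ^ 2 + t ^ 2) / (y ^ 4 + t ^ 4)) x
    = 0 := by
  set k := 1 / (Real.sqrt 2 * Real.pi) with hk
  have hpos : 0 < x ^ 4 + t ^ 4 := by positivity
  have hne : x ^ 4 + t ^ 4 ≠ 0 := ne_of_gt hpos
  have hne2 : t ^ 4 + x ^ 4 ≠ 0 := by rw [add_comm]; exact hne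
  have e1 : (fun s : ℝ => s / (Real.sqrt 2 * Real.pi) * (x ^ 2 + s ^ 2) / (x ^ 4 + s ^ 4))
      = (fun y : ℝ => k * ((((1 : ℝ) * x ^ 2) * y ^ 1 + ((1 : ℝ) * x ^ 0) * y ^ 3) / (x ^ 4 + y ^ 4) ^ 1)) := by
    funext y; rw [hk]; ring
  have e2 : (fun y : ℝ => t / (Real.sqrt 2 * Real.pi) * (y ^ 2 + t ^ 2) / (y ^ 4 + t ^ 4))
      = (fun y : ℝ => k * ((((1 : ℝ) * t ^ 3) * y ^ 0 + ((1 : ℝ) * t ^ 1) * y ^ 2) / (t ^ 4 + y ^ 4) ^ 1)) := by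
    funext y; rw [hk]; ring
  rw [e1, e2, chain1 k x t hne, chain2 k t x hne2]
  field_simp
  ring
end

section
/- Let C be a Cauchy random variable with density y ↦ (1/π)·s/(y² + s²) where s = t·cos(kπ/2^n), t > 0, n ≥ 2, k odd with 1 ≤ k ≤ 2^{n-1}-1. Then W = |C - t·sin(kπ/2^n)| has density on (0,∞) given by f(w) = 2t(w²+t²)cos(kπ/2^n) / (π(w⁴+t⁴+2w²t²cos(kπ/2^{n-1}))). -/
open MeasureTheory

theorem stmt_7 (n : ℕ) (hn : 2 ≤ n) (k : ℕ) (hk : Odd k) (hk1 : 1 ≤ k)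
    (hk2 : k ≤ 2 ^ (n - 1) - 1) (t : ℝ) (ht : 0 < t) :
    Measure.map (fun y : ℝ => |y - t * Real.sin ((k : ℝ) * Real.pi / 2 ^ n)|)
      (volume.withDensity fun y : ℝ =>
        ENNReal.ofReal ((1 / Real.pi) * (t * Real.cos ((k : ℝ) * Real.pi / 2 ^ n)) /
          (y ^ 2 + (t * Real.cos ((k : ℝ) * Real.pi / 2 ^ n)) ^ 2)))
    = volume.withDensity (fun w : ℝ =>
        if 0 < w then
          ENNReal.ofReal (2 * t * (w ^ 2 + t ^ 2) * Real.cos ((k : ℝ) * Real.pi / 2 ^ n) /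
            (Real.pi * (w ^ 4 + t ^ 4 + 2 * w ^ 2 * t ^ 2 * Real.cos ((k : ℝ) * Real.pi / 2 ^ (n - 1)))))
        else 0) := by
  have hπ : (0:ℝ) < Real.pi := Real.pi_pos
  set θ : ℝ := (k : ℝ) * Real.pi / 2 ^ n with hθdef
  set c : ℝ := Real.cos θ with hcdef
  set S : ℝ := Real.sin θ with hSdef
  -- bounds on θ
  have h2n : (0:ℝ) < 2 ^ n := by positivity
  have hθ0 : 0 < θ := by
    have hk' : (1:ℝ) ≤ (k:ℝ) := by exact_mod_cast hk1
    rw [hθdef]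
    positivity
  have hklt : (k:ℝ) < 2 ^ (n-1) := by
    have h1 : 1 ≤ 2 ^ (n-1) := Nat.one_le_two_pow
    have : k < 2 ^ (n-1) := by omega
    exact_mod_cast this
  have h2pow : (2:ℝ) ^ n = 2 ^ (n-1) * 2 := by
    rw [← pow_succ]
    congr 1
    omega
  have hθlt : θ < Real.pi / 2 := by
    rw [hθdef, div_lt_div_iff₀ h2n (by norm_num)]
    rw [h2pow]
    have h2n1 : (0:ℝ) < 2 ^ (n-1) := by positivity
    nlinarith
  have hc : 0 < c := Real.cos_pos_of_mem_Ioo ⟨by linarith, hθlt⟩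
  have hS2 : S ^ 2 = 1 - c ^ 2 := Real.sin_sq θ
  have hdouble : (k : ℝ) * Real.pi / 2 ^ (n-1) = 2 * θ := by
    rw [hθdef, h2pow]; ring
  -- measurability
  have hT : Measurable (fun y : ℝ => |y - t * S|) := (measurable_id.sub_const (t*S)).abs
  have hreal : Measurable (fun y : ℝ => (1 / Real.pi) * (t * c) / (y ^ 2 + (t * c) ^ 2)) :=
    measurable_const.div ((measurable_id.pow_const 2).add_const _)
  have hf0 : Measurable (fun y : ℝ => ENNReal.ofReal ((1 / Real.pi) * (t * c) / (y ^ 2 + (t * c) ^ 2))) :=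
    hreal.ennreal_ofReal
  set g : ℝ → ENNReal := fun x =>
    ENNReal.ofReal ((1 / Real.pi) * (t * c) / ((x + t * S) ^ 2 + (t * c) ^ 2)) with hgdef
  have hg : Measurable g :=
    ((measurable_const.div (((measurable_id.add_const (t*S)).pow_const 2).add_const _))).ennreal_ofReal
  ext A hA
  rw [Measure.map_apply hT hA, withDensity_apply _ (hT hA), withDensity_apply _ hA]
  set P : Set ℝ := Set.Ioi 0 ∩ A with hPdef
  have hP : MeasurableSet P := measurableSet_Ioi.inter hA
  -- Step 1 : translation
  have hBmeas : MeasurableSet (abs ⁻¹' A : Set ℝ) := measurable_abs hA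
  have step1 :
      ∫⁻ y in (fun y : ℝ => |y - t * S|) ⁻¹' A,
        ENNReal.ofReal ((1 / Real.pi) * (t * c) / (y ^ 2 + (t * c) ^ 2)) ∂volume
        = ∫⁻ x in abs ⁻¹' A, g x ∂volume := by
    have hpre : (fun y : ℝ => |y - t * S|) ⁻¹' A
        = (fun y : ℝ => y - t * S) ⁻¹' (abs ⁻¹' A) := rfl
    rw [hpre]
    have := (measurePreserving_sub_right (volume : Measure ℝ) (t*S)).setLIntegral_comp_preimage
      hBmeas hg
    simpa [hgdef, sub_add_cancel] using this
  rw [step1]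
  -- Step 2 : split the preimage of abs
  have hAEzero : ∀ᵐ x : ℝ, x ≠ (0:ℝ) := by
    rw [ae_iff]
    simpa using measure_singleton (0:ℝ)
  have hsetae : (abs ⁻¹' A : Set ℝ) =ᵐ[volume] ((((Neg.neg : ℝ → ℝ) ⁻¹' P) ∪ P : Set ℝ)) := by
    filter_upwards [hAEzero] with x hx
    show (x ∈ abs ⁻¹' A) = (x ∈ ((((Neg.neg : ℝ → ℝ) ⁻¹' P) ∪ P : Set ℝ)))
    simp only [eq_iff_iff, Set.mem_preimage, Set.mem_union, hPdef, Set.mem_inter_iff,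
      Set.mem_Ioi]
    rcases hx.lt_or_gt with hlt | hgt
    · rw [abs_of_neg hlt]
      constructor
      · intro h; exact Or.inl ⟨by linarith, h⟩
      · rintro (⟨_, h⟩ | ⟨h, _⟩)
        · exact h
        · linarith
    · rw [abs_of_pos hgt]
      constructor
      · intro h; exact Or.inr ⟨hgt, h⟩
      · rintro (⟨h, _⟩ | ⟨_, h⟩)
        · linarith
        · exact h
  have hdisj : Disjoint ((Neg.neg : ℝ → ℝ) ⁻¹' P) P := by
    rw [Set.disjoint_left]
    rintro x ⟨hx1, -⟩ ⟨hx2, -⟩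
    simp only [Set.mem_Ioi] at hx1 hx2
    linarith
  rw [setLIntegral_congr hsetae, lintegral_union hP hdisj]
  -- Step 3 : reflect the negative part
  have step3 : ∫⁻ x in (Neg.neg : ℝ → ℝ) ⁻¹' P, g x ∂volume = ∫⁻ x in P, g (-x) ∂volume := by
    have := (Measure.measurePreserving_neg (volume : Measure ℝ)).setLIntegral_comp_preimage
      hP (hg.comp measurable_neg)
    simpa using this
  rw [step3]
  have hadd : (∫⁻ x in P, g (-x) ∂volume) + (∫⁻ x in P, g x ∂volume)
      = ∫⁻ x in P, (g (-x) + g x) ∂volume :=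
    (lintegral_add_left (Measurable.comp hg measurable_neg) g).symm
  rw [hadd]
  -- Step 4 : the right-hand side
  have step4 :
      ∫⁻ w in A,
        (if 0 < w then
          ENNReal.ofReal (2 * t * (w ^ 2 + t ^ 2) * c /
            (Real.pi * (w ^ 4 + t ^ 4 + 2 * w ^ 2 * t ^ 2 * Real.cos ((k : ℝ) * Real.pi / 2 ^ (n-1)))))
        else 0) ∂volume
      = ∫⁻ w in P,
          ENNReal.ofReal (2 * t * (w ^ 2 + t ^ 2) * c /
            (Real.pi * (w ^ 4 + t ^ 4 + 2 * w ^ 2 * t ^ 2 * (2 * c ^ 2 - 1)))) ∂volume := by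
    rw [show (fun w : ℝ =>
        (if 0 < w then
          ENNReal.ofReal (2 * t * (w ^ 2 + t ^ 2) * c /
            (Real.pi * (w ^ 4 + t ^ 4 + 2 * w ^ 2 * t ^ 2 * Real.cos ((k : ℝ) * Real.pi / 2 ^ (n-1)))))
        else 0))
        = (Set.Ioi (0:ℝ)).indicator (fun w : ℝ =>
          ENNReal.ofReal (2 * t * (w ^ 2 + t ^ 2) * c /
            (Real.pi * (w ^ 4 + t ^ 4 + 2 * w ^ 2 * t ^ 2 * (2 * c ^ 2 - 1))))) from ?_]
    · exact setLIntegral_indicator measurableSet_Ioi _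
    · funext w
      rw [hdouble, Real.cos_two_mul, ← hcdef]
      by_cases h : 0 < w <;> simp [Set.indicator, Set.mem_Ioi, h]
  rw [step4]
  -- Step 5 : pointwise identity on P
  refine setLIntegral_congr_fun hP (fun w hw => ?_)
  have hw0 : 0 < w := hw.1
  have htc : 0 < t * c := mul_pos ht hc
  have hD1 : 0 < (-w + t * S) ^ 2 + (t * c) ^ 2 := by positivity
  have hD2 : 0 < (w + t * S) ^ 2 + (t * c) ^ 2 := by positivity
  have ha : 0 ≤ (1 / Real.pi) * (t * c) := by positivity
  rw [hgdef]
  dsimp only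
  rw [← ENNReal.ofReal_add (by positivity) (by positivity)]
  congr 1
  have hsum : ((-w + t * S) ^ 2 + (t * c) ^ 2) + ((w + t * S) ^ 2 + (t * c) ^ 2)
      = 2 * (w ^ 2 + t ^ 2) := by
    linear_combination (2 * t ^ 2) * hS2
  have hprod : ((-w + t * S) ^ 2 + (t * c) ^ 2) * ((w + t * S) ^ 2 + (t * c) ^ 2)
      = w ^ 4 + t ^ 4 + 2 * w ^ 2 * t ^ 2 * (2 * c ^ 2 - 1) := by
    linear_combination (t ^ 4 * (S ^ 2 + c ^ 2 + 1) - 2 * w ^ 2 * t ^ 2) * hS2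
  rw [div_add_div _ _ hD1.ne' hD2.ne', ← hprod]
  rw [show (1 / Real.pi * (t * c) * ((w + t * S) ^ 2 + (t * c) ^ 2) +
      ((-w + t * S) ^ 2 + (t * c) ^ 2) * (1 / Real.pi * (t * c)))
      = 1 / Real.pi * (t * c) *
        (((-w + t * S) ^ 2 + (t * c) ^ 2) + ((w + t * S) ^ 2 + (t * c) ^ 2)) from by ring,
    hsum, div_eq_div_iff (by positivity) (by positivity)]
  field_simp
end

section
/- For every k ∈ ℕ with k ≥ 1 and t > 0, the function f(x,t) = t·cos(π/(2(2k+1))) / (π·[(x + (-1)^{k+1}·t·sin(π/(2(2k+1))))² + t²·cos²(π/(2(2k+1)))]) satisfies the odd-order Laplace equation ∂^{2k+1}f/∂t^{2k+1} + ∂^{2k+1}f/∂x^{2k+1} = 0 for all x ∈ ℝ, t > 0. -/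
open Complex Filter Nat

lemma aux_eqon (c w : ℂ) (n : ℕ) :
    Set.EqOn
      (iteratedDeriv n (fun u : ℝ => (((c + u * w)⁻¹).im) / Real.pi))
      (fun u : ℝ =>
        (((-1) ^ n * (n ! : ℂ) * w ^ n * ((c + u * w) ^ (n + 1))⁻¹).im) / Real.pi)
      {u : ℝ | c + u * w ≠ 0} := by
  induction n with
  | zero =>
      intro s hs
      simp [iteratedDeriv_zero]
  | succ n ih =>
      intro s hs
      have hU : IsOpen {u : ℝ | c + u * w ≠ 0} := by
        have : Continuous fun u : ℝ => c + u * w := by continuity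
        exact isOpen_compl_singleton.preimage this
      have hz : c + (s : ℂ) * w ≠ 0 := hs
      have hev : iteratedDeriv n (fun u : ℝ => (((c + u * w)⁻¹).im) / Real.pi)
          =ᶠ[nhds s] (fun u : ℝ =>
            (((-1) ^ n * (n ! : ℂ) * w ^ n * ((c + u * w) ^ (n + 1))⁻¹).im) / Real.pi) := by
        filter_upwards [hU.mem_nhds hs] using ih
      rw [iteratedDeriv_succ, hev.deriv_eq]
      have h2 : HasDerivAt (fun u : ℝ => c + u * w) w s := by
        simpa using ((Complex.ofRealCLM.hasDerivAt (x := s)).mul_const w).const_add c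
      have hzp : (c + (s : ℂ) * w) ^ (n + 1) ≠ 0 := pow_ne_zero _ hz
      have h1 : HasDerivAt (fun z : ℂ => (-1) ^ n * (n ! : ℂ) * w ^ n * ((z ^ (n + 1))⁻¹))
          ((-1) ^ n * (n ! : ℂ) * w ^ n *
            (-(((n : ℂ) + 1) * (c + s * w) ^ n) / ((c + s * w) ^ (n + 1)) ^ 2))
          (c + s * w) := by
        have := ((hasDerivAt_pow (n + 1) (c + (s : ℂ) * w)).inv hzp).const_mul
          ((-1) ^ n * (n ! : ℂ) * w ^ n)
        simpa using this
      have h3 : HasDerivAt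
          (fun u : ℝ => (-1) ^ n * (n ! : ℂ) * w ^ n * (((c + u * w) ^ (n + 1))⁻¹))
          (w • ((-1) ^ n * (n ! : ℂ) * w ^ n *
            (-(((n : ℂ) + 1) * (c + s * w) ^ n) / ((c + s * w) ^ (n + 1)) ^ 2))) s := by
        have := HasFDerivAt.comp_hasDerivAt s (h1.hasFDerivAt.restrictScalars ℝ) h2
        simpa [Function.comp_def] using this
      have h4 : HasDerivAt
          (fun u : ℝ => (((-1) ^ n * (n ! : ℂ) * w ^ n * (((c + u * w) ^ (n + 1))⁻¹)).im) / Real.pi)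
          (((w • ((-1) ^ n * (n ! : ℂ) * w ^ n *
            (-(((n : ℂ) + 1) * (c + s * w) ^ n) / ((c + s * w) ^ (n + 1)) ^ 2))).im) / Real.pi) s := by
        have him := HasFDerivAt.comp_hasDerivAt s (Complex.imCLM.hasFDerivAt) h3
        simpa using him.div_const Real.pi
      rw [h4.deriv]
      have key : w • ((-1) ^ n * (n ! : ℂ) * w ^ n *
            (-(((n : ℂ) + 1) * (c + s * w) ^ n) / ((c + s * w) ^ (n + 1)) ^ 2))
          = (-1) ^ (n + 1) * ((n + 1)! : ℂ) * w ^ (n + 1) * ((c + s * w) ^ (n + 1 + 1))⁻¹ := by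
        rw [smul_eq_mul]
        have hz' : c + (s : ℂ) * w ≠ 0 := hz
        rw [show ((c + (s : ℂ) * w) ^ (n + 1)) ^ 2 = (c + (s : ℂ) * w) ^ (n + 1 + 1) * (c + (s : ℂ) * w) ^ n by ring,
          neg_div, mul_div_mul_right _ _ (pow_ne_zero n hz')]
        push_cast [Nat.factorial_succ]
        ring
      rw [key]

lemma exp_neg_odd (m : ℕ) (hm : Odd m) :
    Complex.exp (↑(-(m * Real.pi) : ℝ) * Complex.I) = -1 := by
  have : ((-(m * Real.pi) : ℝ) : ℂ) * I = -(↑m * (↑Real.pi * I)) := by push_cast; ring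
  rw [this, Complex.exp_neg, Complex.exp_nat_mul, Complex.exp_pi_mul_I, hm.neg_one_pow]
  norm_num

lemma w_as_exp (a c ph : ℝ) (hre : Real.cos ph = a) (him : Real.sin ph = -c) :
    ((a : ℂ) - (c : ℝ) * Complex.I) = Complex.exp (↑ph * I) := by
  apply Complex.ext
  · rw [Complex.exp_ofReal_mul_I_re, hre]
    simp
  · rw [Complex.exp_ofReal_mul_I_im, him]
    simp

lemma wpow (k : ℕ) :
    ((((-1:ℝ)^(k+1) * Real.sin (Real.pi/(2*(2*k+1))) : ℝ) : ℂ)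
      - (Real.cos (Real.pi/(2*(2*k+1))) : ℝ) * Complex.I) ^ (2*k+1) = -1 := by
  set θ : ℝ := Real.pi/(2*(2*k+1)) with hθ
  have hnθ : (2*(k:ℝ)+1) * θ = Real.pi / 2 := by
    rw [hθ]
    have : (2*(k:ℝ)+1) ≠ 0 := by positivity
    field_simp
  rcases Nat.even_or_odd k with ⟨j, hj⟩ | ⟨j, hj⟩
  · set ph : ℝ := -θ - Real.pi/2 with hph
    have hodd : Odd (k+1) := ⟨j, by omega⟩
    have hre : Real.cos ph = (-1:ℝ)^(k+1) * Real.sin θ := by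
      rw [hodd.neg_one_pow, hph, show -θ - Real.pi/2 = -(θ + Real.pi/2) by ring,
        Real.cos_neg, Real.cos_add_pi_div_two]
      ring
    have him : Real.sin ph = -Real.cos θ := by
      rw [hph, show -θ - Real.pi/2 = -(θ + Real.pi/2) by ring,
        Real.sin_neg, Real.sin_add_pi_div_two]
    rw [w_as_exp _ _ _ hre him, ← Complex.exp_nat_mul]
    have harg : (↑(2*k+1) : ℂ) * (↑ph * I) = ↑(-(((k+1 : ℕ)) * Real.pi) : ℝ) * I := by
      have h2 : (2*(k:ℝ)+1) * ph = -((k+1 : ℕ) * Real.pi) := by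
        rw [hph]; push_cast; nlinarith [hnθ]
      rw [show ((↑(2*k+1):ℂ)) * (↑ph * I) = (((2*(k:ℝ)+1) * ph : ℝ) : ℂ) * I by push_cast; ring, h2]
    rw [harg, exp_neg_odd _ hodd]
  · set ph : ℝ := θ - Real.pi/2 with hph
    have heven : Even (k+1) := ⟨j+1, by omega⟩
    have hre : Real.cos ph = (-1:ℝ)^(k+1) * Real.sin θ := by
      rw [heven.neg_one_pow, hph, show θ - Real.pi/2 = -(Real.pi/2 - θ) by ring,
        Real.cos_neg, Real.cos_pi_div_two_sub]
      ring
    have him : Real.sin ph = -Real.cos θ := by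
      rw [hph, show θ - Real.pi/2 = -(Real.pi/2 - θ) by ring,
        Real.sin_neg, Real.sin_pi_div_two_sub]
    rw [w_as_exp _ _ _ hre him, ← Complex.exp_nat_mul]
    have harg : (↑(2*k+1) : ℂ) * (↑ph * I) = ↑(-(((k : ℕ)) * Real.pi) : ℝ) * I := by
      have h2 : (2*(k:ℝ)+1) * ph = -((k : ℕ) * Real.pi) := by
        rw [hph]; push_cast; nlinarith [hnθ]
      rw [show ((↑(2*k+1):ℂ)) * (↑ph * I) = (((2*(k:ℝ)+1) * ph : ℝ) : ℂ) * I by push_cast; ring, h2]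
    rw [harg, exp_neg_odd _ ⟨j, by omega⟩]

theorem stmt_9 (k : ℕ) (hk : 1 ≤ k) (x t : ℝ) (ht : 0 < t) :
    iteratedDeriv (2 * k + 1)
        (fun s : ℝ => s * Real.cos (Real.pi / (2 * (2 * k + 1))) /
          (Real.pi * ((x + (-1 : ℝ) ^ (k + 1) * s * Real.sin (Real.pi / (2 * (2 * k + 1)))) ^ 2
            + s ^ 2 * Real.cos (Real.pi / (2 * (2 * k + 1))) ^ 2))) t
      + iteratedDeriv (2 * k + 1)
        (fun y : ℝ => t * Real.cos (Real.pi / (2 * (2 * k + 1))) /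
          (Real.pi * ((y + (-1 : ℝ) ^ (k + 1) * t * Real.sin (Real.pi / (2 * (2 * k + 1)))) ^ 2
            + t ^ 2 * Real.cos (Real.pi / (2 * (2 * k + 1))) ^ 2))) x
    = 0 := by
  set θ : ℝ := Real.pi / (2 * (2 * k + 1)) with hθ
  set w : ℂ := ((((-1:ℝ)^(k+1) * Real.sin θ : ℝ) : ℂ) - (Real.cos θ : ℝ) * Complex.I) with hw
  have hwre : w.re = (-1:ℝ)^(k+1) * Real.sin θ := by
    rw [hw]
    simp only [Complex.sub_re, Complex.ofReal_re, Complex.mul_re, Complex.ofReal_im,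
      Complex.I_re, Complex.I_im]
    ring
  have hwim : w.im = -Real.cos θ := by
    rw [hw]
    simp only [Complex.sub_im, Complex.ofReal_im, Complex.mul_im, Complex.ofReal_re,
      Complex.I_re, Complex.I_im]
    ring
  have hθ1 : 0 < θ := by rw [hθ]; positivity
  have hθ2 : θ < Real.pi / 2 := by
    rw [hθ]
    apply div_lt_div_of_pos_left Real.pi_pos (by norm_num)
    have : (1:ℝ) ≤ (k:ℝ) := by exact_mod_cast hk
    nlinarith
  have hcos : 0 < Real.cos θ := Real.cos_pos_of_mem_Ioo ⟨by linarith, hθ2⟩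
  have hz : (x:ℂ) + ↑t * w ≠ 0 := by
    intro h
    have him := congrArg Complex.im h
    simp [hwim] at him
    rcases him with h' | h'
    · linarith
    · linarith
  have hp : w ^ (2*k+1) = -1 := by rw [hw, hθ]; exact wpow k
  have hf1 : (fun s : ℝ => s * Real.cos θ /
        (Real.pi * ((x + (-1 : ℝ) ^ (k + 1) * s * Real.sin θ) ^ 2 + s ^ 2 * Real.cos θ ^ 2)))
      = fun s : ℝ => ((((x:ℂ) + s * w)⁻¹).im) / Real.pi := by
    funext s
    rw [Complex.inv_im, Complex.normSq_apply]
    have h1 : ((x:ℂ) + ↑s * w).im = -(s * Real.cos θ) := by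
      simp [hwim]
    have h2 : ((x:ℂ) + ↑s * w).re = x + (-1:ℝ)^(k+1) * s * Real.sin θ := by
      simp [hwre]; ring
    rw [h1, h2, neg_neg, div_div]
    ring_nf
  have hf2 : (fun y : ℝ => t * Real.cos θ /
        (Real.pi * ((y + (-1 : ℝ) ^ (k + 1) * t * Real.sin θ) ^ 2 + t ^ 2 * Real.cos θ ^ 2)))
      = fun y : ℝ => ((((t:ℂ) * w + y * 1)⁻¹).im) / Real.pi := by
    funext y
    rw [Complex.inv_im, Complex.normSq_apply]
    have h1 : ((t:ℂ) * w + ↑y * 1).im = -(t * Real.cos θ) := by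
      simp [hwim]
    have h2 : ((t:ℂ) * w + ↑y * 1).re = y + (-1:ℝ)^(k+1) * t * Real.sin θ := by
      simp [hwre]; ring
    rw [h1, h2, neg_neg, div_div]
    ring_nf
  rw [hf1, hf2]
  have e1 := aux_eqon (x:ℂ) w (2*k+1) (show (x:ℂ) + ↑t * w ≠ 0 from hz)
  have e2 := aux_eqon ((t:ℂ) * w) 1 (2*k+1)
    (show (t:ℂ) * w + ↑x * 1 ≠ 0 by rw [mul_one, add_comm]; exact hz)
  rw [e1, e2]
  have hcomm : ((t:ℂ) * w + ↑x * 1) = (x:ℂ) + ↑t * w := by ring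
  beta_reduce
  rw [hcomm, ← add_div, ← Complex.add_im]
  have hsum : ((-1) ^ (2*k+1) * ((2*k+1)! : ℂ) * w ^ (2*k+1) * (((x:ℂ) + ↑t * w) ^ (2*k+1 + 1))⁻¹)
      + ((-1) ^ (2*k+1) * ((2*k+1)! : ℂ) * 1 ^ (2*k+1) * (((x:ℂ) + ↑t * w) ^ (2*k+1 + 1))⁻¹) = 0 := by
    rw [hp]; ring
  rw [hsum]
  simp
end

section
/- For t > 0, the function u(x,t) = (√3/(2π)) · t/(x² + xt + t²) satisfies the third-order Laplace equation ∂³u/∂t³ + ∂³u/∂x³ = 0 for all x ∈ ℝ, t > 0. -/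
open Real Filter Topology

theorem stmt_10 (x t : ℝ) (ht : 0 < t) :
    iteratedDeriv 3 (fun s : ℝ => Real.sqrt 3 / (2 * Real.pi) * s / (x ^ 2 + x * s + s ^ 2)) t
      + iteratedDeriv 3 (fun y : ℝ => Real.sqrt 3 / (2 * Real.pi) * t / (y ^ 2 + y * t + t ^ 2)) x
    = 0 := by
  set c := Real.sqrt 3 / (2 * Real.pi) with hc
  -- denominator for the first function
  have hden : ∀ s : ℝ, HasDerivAt (fun s : ℝ => x ^ 2 + x * s + s ^ 2) (x + 2 * s) s := by
    intro s
    have h1 : HasDerivAt (fun s : ℝ => x ^ 2 + x * s) (0 + x * 1) s :=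
      (hasDerivAt_const s (x ^ 2)).add ((hasDerivAt_id s).const_mul x)
    have h2 : HasDerivAt (fun s : ℝ => s ^ 2) ((2 : ℕ) * s ^ 1) s := hasDerivAt_pow 2 s
    have := h1.add h2
    refine this.congr_deriv ?_ <;> ring
  have hQ : (0:ℝ) < x ^ 2 + x * t + t ^ 2 := by nlinarith [sq_nonneg (2 * x + t)]
  -- first derivatives pointwise on nonzero set
  have hd1 : ∀ s : ℝ, x ^ 2 + x * s + s ^ 2 ≠ 0 →
      HasDerivAt (fun s : ℝ => c * s / (x ^ 2 + x * s + s ^ 2))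
        (c * (x ^ 2 - s ^ 2) / (x ^ 2 + x * s + s ^ 2) ^ 2) s := by
    intro s hs
    have hnum : HasDerivAt (fun s : ℝ => c * s) (c * 1) s := (hasDerivAt_id s).const_mul c
    have := hnum.div (hden s) hs
    refine this.congr_deriv ?_
    field_simp
    ring
  have hd2 : ∀ s : ℝ, x ^ 2 + x * s + s ^ 2 ≠ 0 →
      HasDerivAt (fun s : ℝ => c * (x ^ 2 - s ^ 2) / (x ^ 2 + x * s + s ^ 2) ^ 2)
        (2 * c * (s ^ 3 - 3 * x ^ 2 * s - x ^ 3) / (x ^ 2 + x * s + s ^ 2) ^ 3) s := by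
    intro s hs
    have hnum : HasDerivAt (fun s : ℝ => c * (x ^ 2 - s ^ 2)) (c * (0 - 2 * s)) s := by
      have : HasDerivAt (fun s : ℝ => x ^ 2 - s ^ 2) (0 - (2:ℕ) * s ^ 1) s :=
        (hasDerivAt_const s (x ^ 2)).sub (hasDerivAt_pow 2 s)
      have := this.const_mul c
      refine this.congr_deriv ?_; push_cast; ring
    have hdpow : HasDerivAt (fun s : ℝ => (x ^ 2 + x * s + s ^ 2) ^ 2)
        ((2:ℕ) * (x ^ 2 + x * s + s ^ 2) ^ 1 * (x + 2 * s)) s := (hden s).pow 2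
    have hs2 : (x ^ 2 + x * s + s ^ 2) ^ 2 ≠ 0 := pow_ne_zero 2 hs
    have := hnum.div hdpow hs2
    refine this.congr_deriv ?_
    field_simp
    ring
  have hd3 : ∀ s : ℝ, x ^ 2 + x * s + s ^ 2 ≠ 0 →
      HasDerivAt (fun s : ℝ => 2 * c * (s ^ 3 - 3 * x ^ 2 * s - x ^ 3) / (x ^ 2 + x * s + s ^ 2) ^ 3)
        (6 * c * s * (4 * x ^ 3 + 6 * x ^ 2 * s - s ^ 3) / (x ^ 2 + x * s + s ^ 2) ^ 4) s := by
    intro s hs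
    have h0 : HasDerivAt (fun s : ℝ => s ^ 3 - 3 * x ^ 2 * s - x ^ 3) (3 * s ^ 2 - 3 * x ^ 2) s := by
      have h1 : HasDerivAt (fun s : ℝ => s ^ 3) ((3:ℕ) * s ^ 2) s := hasDerivAt_pow 3 s
      have h2 : HasDerivAt (fun s : ℝ => 3 * x ^ 2 * s) (3 * x ^ 2 * 1) s :=
        (hasDerivAt_id s).const_mul (3 * x ^ 2)
      have h3 := (h1.sub h2).sub (hasDerivAt_const s (x ^ 3))
      refine h3.congr_deriv ?_
      push_cast; ring
    have hnum : HasDerivAt (fun s : ℝ => 2 * c * (s ^ 3 - 3 * x ^ 2 * s - x ^ 3))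
        (2 * c * (3 * s ^ 2 - 3 * x ^ 2)) s := h0.const_mul (2 * c)
    have hdpow : HasDerivAt (fun s : ℝ => (x ^ 2 + x * s + s ^ 2) ^ 3)
        ((3:ℕ) * (x ^ 2 + x * s + s ^ 2) ^ 2 * (x + 2 * s)) s := (hden s).pow 3
    have hs3 : (x ^ 2 + x * s + s ^ 2) ^ 3 ≠ 0 := pow_ne_zero 3 hs
    have := hnum.div hdpow hs3
    refine this.congr_deriv ?_
    field_simp
    ring
  -- open set where denominator nonzero
  have hcont : Continuous fun s : ℝ => x ^ 2 + x * s + s ^ 2 := by continuity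
  have hUopen : IsOpen {s : ℝ | x ^ 2 + x * s + s ^ 2 ≠ 0} :=
    isOpen_compl_singleton.preimage hcont
  have htU : {s : ℝ | x ^ 2 + x * s + s ^ 2 ≠ 0} ∈ 𝓝 t :=
    hUopen.mem_nhds (ne_of_gt hQ)
  -- eventual equalities
  have e1 : deriv (fun s : ℝ => c * s / (x ^ 2 + x * s + s ^ 2)) =ᶠ[𝓝 t]
      (fun s : ℝ => c * (x ^ 2 - s ^ 2) / (x ^ 2 + x * s + s ^ 2) ^ 2) :=
    eventually_of_mem htU (fun s hs => (hd1 s hs).deriv)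
  have e2 : deriv (fun s : ℝ => c * (x ^ 2 - s ^ 2) / (x ^ 2 + x * s + s ^ 2) ^ 2) =ᶠ[𝓝 t]
      (fun s : ℝ => 2 * c * (s ^ 3 - 3 * x ^ 2 * s - x ^ 3) / (x ^ 2 + x * s + s ^ 2) ^ 3) :=
    eventually_of_mem htU (fun s hs => (hd2 s hs).deriv)
  have key1 : iteratedDeriv 3 (fun s : ℝ => c * s / (x ^ 2 + x * s + s ^ 2)) t
      = 6 * c * t * (4 * x ^ 3 + 6 * x ^ 2 * t - t ^ 3) / (x ^ 2 + x * t + t ^ 2) ^ 4 := by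
    have h1 : deriv (deriv (deriv (fun s : ℝ => c * s / (x ^ 2 + x * s + s ^ 2)))) t
        = deriv (fun s : ℝ => 2 * c * (s ^ 3 - 3 * x ^ 2 * s - x ^ 3) / (x ^ 2 + x * s + s ^ 2) ^ 3) t := by
      apply Filter.EventuallyEq.deriv_eq
      exact (e1.deriv).trans e2
    have u1 : iteratedDeriv 3 (fun s : ℝ => c * s / (x ^ 2 + x * s + s ^ 2))
        = deriv (iteratedDeriv 2 (fun s : ℝ => c * s / (x ^ 2 + x * s + s ^ 2))) :=
      iteratedDeriv_succ
    have u2 : iteratedDeriv 2 (fun s : ℝ => c * s / (x ^ 2 + x * s + s ^ 2))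
        = deriv (iteratedDeriv 1 (fun s : ℝ => c * s / (x ^ 2 + x * s + s ^ 2))) :=
      iteratedDeriv_succ
    rw [u1, u2, iteratedDeriv_one, h1, (hd3 t (ne_of_gt hQ)).deriv]
  -- second function: denominator positive everywhere
  have hP : ∀ y : ℝ, (0:ℝ) < y ^ 2 + y * t + t ^ 2 := by
    intro y; nlinarith [sq_nonneg (2 * y + t)]
  have hpden : ∀ y : ℝ, HasDerivAt (fun y : ℝ => y ^ 2 + y * t + t ^ 2) (2 * y + t) y := by
    intro y
    have := ((hasDerivAt_pow 2 y).add ((hasDerivAt_id y).mul_const t)).add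
      (hasDerivAt_const y (t ^ 2))
    refine this.congr_deriv ?_
    push_cast; ring
  have gd1 : ∀ y : ℝ, HasDerivAt (fun y : ℝ => c * t / (y ^ 2 + y * t + t ^ 2))
      (-(c * t) * (2 * y + t) / (y ^ 2 + y * t + t ^ 2) ^ 2) y := by
    intro y
    have := (hasDerivAt_const y (c * t)).div (hpden y) (ne_of_gt (hP y))
    refine this.congr_deriv ?_
    field_simp
    ring
  have gd2 : ∀ y : ℝ, HasDerivAt (fun y : ℝ => -(c * t) * (2 * y + t) / (y ^ 2 + y * t + t ^ 2) ^ 2)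
      (6 * c * t * (y ^ 2 + y * t) / (y ^ 2 + y * t + t ^ 2) ^ 3) y := by
    intro y
    have hnum : HasDerivAt (fun y : ℝ => -(c * t) * (2 * y + t)) (-(c * t) * (2 * 1 + 0)) y :=
      (((hasDerivAt_id y).const_mul 2).add (hasDerivAt_const y t)).const_mul (-(c * t))
    have hdpow : HasDerivAt (fun y : ℝ => (y ^ 2 + y * t + t ^ 2) ^ 2)
        ((2:ℕ) * (y ^ 2 + y * t + t ^ 2) ^ 1 * (2 * y + t)) y := (hpden y).pow 2
    have := hnum.div hdpow (pow_ne_zero 2 (ne_of_gt (hP y)))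
    refine this.congr_deriv ?_
    have := ne_of_gt (hP y)
    field_simp
    ring
  have gd3 : ∀ y : ℝ, HasDerivAt (fun y : ℝ => 6 * c * t * (y ^ 2 + y * t) / (y ^ 2 + y * t + t ^ 2) ^ 3)
      (6 * c * t * (2 * y + t) * (t ^ 2 - 2 * y ^ 2 - 2 * y * t) / (y ^ 2 + y * t + t ^ 2) ^ 4) y := by
    intro y
    have hnum : HasDerivAt (fun y : ℝ => 6 * c * t * (y ^ 2 + y * t)) (6 * c * t * (2 * y + t)) y := by
      have h1 : HasDerivAt (fun y : ℝ => y ^ 2) ((2:ℕ) * y ^ 1) y := hasDerivAt_pow 2 y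
      have h2 : HasDerivAt (fun y : ℝ => y * t) (1 * t) y := (hasDerivAt_id y).mul_const t
      have := (h1.add h2).const_mul (6 * c * t)
      refine this.congr_deriv ?_; push_cast; ring
    have hdpow : HasDerivAt (fun y : ℝ => (y ^ 2 + y * t + t ^ 2) ^ 3)
        ((3:ℕ) * (y ^ 2 + y * t + t ^ 2) ^ 2 * (2 * y + t)) y := (hpden y).pow 3
    have := hnum.div hdpow (pow_ne_zero 3 (ne_of_gt (hP y)))
    refine this.congr_deriv ?_
    have := ne_of_gt (hP y)
    field_simp
    ring
  have key2 : iteratedDeriv 3 (fun y : ℝ => c * t / (y ^ 2 + y * t + t ^ 2)) x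
      = 6 * c * t * (2 * x + t) * (t ^ 2 - 2 * x ^ 2 - 2 * x * t) / (x ^ 2 + x * t + t ^ 2) ^ 4 := by
    have f1 : deriv (fun y : ℝ => c * t / (y ^ 2 + y * t + t ^ 2))
        = (fun y : ℝ => -(c * t) * (2 * y + t) / (y ^ 2 + y * t + t ^ 2) ^ 2) :=
      funext fun y => (gd1 y).deriv
    have f2 : deriv (fun y : ℝ => -(c * t) * (2 * y + t) / (y ^ 2 + y * t + t ^ 2) ^ 2)
        = (fun y : ℝ => 6 * c * t * (y ^ 2 + y * t) / (y ^ 2 + y * t + t ^ 2) ^ 3) :=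
      funext fun y => (gd2 y).deriv
    have u1 : iteratedDeriv 3 (fun y : ℝ => c * t / (y ^ 2 + y * t + t ^ 2))
        = deriv (iteratedDeriv 2 (fun y : ℝ => c * t / (y ^ 2 + y * t + t ^ 2))) :=
      iteratedDeriv_succ
    have u2 : iteratedDeriv 2 (fun y : ℝ => c * t / (y ^ 2 + y * t + t ^ 2))
        = deriv (iteratedDeriv 1 (fun y : ℝ => c * t / (y ^ 2 + y * t + t ^ 2))) :=
      iteratedDeriv_succ
    rw [u1, u2, iteratedDeriv_one, f1, f2, (gd3 x).deriv]
  rw [key1, key2]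
  have hQ4 : (x ^ 2 + x * t + t ^ 2) ^ 4 ≠ 0 := pow_ne_zero 4 (ne_of_gt hQ)
  field_simp
  ring
end

section
/- For every integer m ≥ 1, the Cauchy density f(x,t) = (1/π)·t·cos(π/2m) / ((x + t·sin(π/2m))² + t²·cos²(π/2m)) satisfies the second-order PDE ∂²f/∂t² + ∂²f/∂x² = 2·sin(π/2m)·∂²f/∂x∂t for all x ∈ ℝ, t > 0. -/
set_option maxHeartbeats 2000000 in
theorem cauchy_pde_key (a c x t : ℝ) (hc : c ≠ 0) (ht : 0 < t) (hac : a ^ 2 + c ^ 2 = 1) :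
    iteratedDeriv 2
        (fun s : ℝ => (1 / Real.pi) * (s * c) / ((x + s * a) ^ 2 + s ^ 2 * c ^ 2)) t
      + iteratedDeriv 2
        (fun y : ℝ => (1 / Real.pi) * (t * c) / ((y + t * a) ^ 2 + t ^ 2 * c ^ 2)) x
    = 2 * a *
        deriv (fun y : ℝ =>
          deriv (fun s : ℝ => (1 / Real.pi) * (s * c) / ((y + s * a) ^ 2 + s ^ 2 * c ^ 2)) t) x := by
  have hπ : Real.pi ≠ 0 := Real.pi_ne_zero
  have hD : ∀ y s : ℝ, s ≠ 0 → (y + s * a) ^ 2 + s ^ 2 * c ^ 2 ≠ 0 := by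
    intro y s hs
    have h1 : 0 < s ^ 2 * c ^ 2 := by positivity
    nlinarith [sq_nonneg (y + s * a)]
  -- first derivative in s
  have hA : ∀ y s : ℝ, s ≠ 0 →
      HasDerivAt (fun s' : ℝ => (1 / Real.pi) * (s' * c) / ((y + s' * a) ^ 2 + s' ^ 2 * c ^ 2))
        ((1 / Real.pi) * ((c * y ^ 2 - c ^ 3 * s ^ 2 - a ^ 2 * c * s ^ 2) /
          (((y + s * a) ^ 2 + s ^ 2 * c ^ 2) ^ 2))) s := by
    intro y s hs
    have hnum : HasDerivAt (fun s' : ℝ => (1 / Real.pi) * (s' * c)) ((1 / Real.pi) * c) s := by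
      simpa using ((hasDerivAt_id s).mul_const c).const_mul (1 / Real.pi)
    have hden : HasDerivAt (fun s' : ℝ => (y + s' * a) ^ 2 + s' ^ 2 * c ^ 2)
        (2 * (y + s * a) * a + 2 * s * c ^ 2) s := by
      have h1 : HasDerivAt (fun s' : ℝ => y + s' * a) a s := by
        simpa using ((hasDerivAt_id s).mul_const a).const_add y
      have h2 := (h1.pow 2).add ((hasDerivAt_pow 2 s).mul_const (c ^ 2))
      refine h2.congr_deriv ?_
      push_cast
      ring
    have h := hnum.div hden (hD y s hs)
    refine h.congr_deriv ?_
    field_simp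
    ring
  have h2d : ∀ g : ℝ → ℝ, iteratedDeriv 2 g = deriv (deriv g) := by
    intro g
    have h12 : (2 : ℕ) = 1 + 1 := rfl
    rw [h12, iteratedDeriv_succ, iteratedDeriv_one]
  have hDt := hD x t ht.ne'
  have hD2 : (((x + t * a) ^ 2 + t ^ 2 * c ^ 2) ^ 2) ≠ 0 := pow_ne_zero _ hDt
  -- second derivative in s at t
  have hB : HasDerivAt (fun s : ℝ => (1 / Real.pi) * ((c * x ^ 2 - c ^ 3 * s ^ 2 - a ^ 2 * c * s ^ 2) /
        (((x + s * a) ^ 2 + s ^ 2 * c ^ 2) ^ 2)))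
      ((1 / Real.pi) * (((2:ℝ)*a^6*c*t^5 + (4:ℝ)*a^5*c*x*t^4 + (6:ℝ)*a^4*c^3*t^5 - (4:ℝ)*a^4*c*x^2*t^3 + (8:ℝ)*a^3*c^3*x*t^4 - (16:ℝ)*a^3*c*x^3*t^2 + (6:ℝ)*a^2*c^5*t^5 - (8:ℝ)*a^2*c^3*x^2*t^3 - (14:ℝ)*a^2*c*x^4*t + (4:ℝ)*a*c^5*x*t^4 - (16:ℝ)*a*c^3*x^3*t^2 - (4:ℝ)*a*c*x^5 + (2:ℝ)*c^7*t^5 - (4:ℝ)*c^5*x^2*t^3 - (6:ℝ)*c^3*x^4*t) /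
        (((x + t * a) ^ 2 + t ^ 2 * c ^ 2) ^ 4))) t := by
    have hnum : HasDerivAt (fun s : ℝ => c * x ^ 2 - c ^ 3 * s ^ 2 - a ^ 2 * c * s ^ 2)
        (-(c ^ 3 * (2 * t)) - a ^ 2 * c * (2 * t)) t := by
      have h1 : HasDerivAt (fun s : ℝ => s ^ 2) (2 * t) t := by
        simpa using hasDerivAt_pow 2 t
      exact (((h1.const_mul (c ^ 3)).const_sub (c * x ^ 2)).sub (h1.const_mul (a ^ 2 * c)))
    have hd1 : HasDerivAt (fun s : ℝ => (x + s * a) ^ 2 + s ^ 2 * c ^ 2)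
        (2 * (x + t * a) * a + 2 * t * c ^ 2) t := by
      have h1 : HasDerivAt (fun s : ℝ => x + s * a) a t := by
        simpa using ((hasDerivAt_id t).mul_const a).const_add x
      have h2 := (h1.pow 2).add ((hasDerivAt_pow 2 t).mul_const (c ^ 2))
      refine h2.congr_deriv ?_
      push_cast
      ring
    have hden := hd1.pow 2
    have h := (hnum.div hden hD2).const_mul (1 / Real.pi)
    refine h.congr_deriv ?_
    simp only [Pi.pow_apply]
    field_simp
    ring
  -- derivative in y of f2
  have hAx : ∀ y : ℝ,
      HasDerivAt (fun y' : ℝ => (1 / Real.pi) * (t * c) / ((y' + t * a) ^ 2 + t ^ 2 * c ^ 2))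
        ((1 / Real.pi) * (((-2) * c * y * t - 2 * a * c * t ^ 2) /
          (((y + t * a) ^ 2 + t ^ 2 * c ^ 2) ^ 2))) y := by
    intro y
    have hnum : HasDerivAt (fun _ : ℝ => (1 / Real.pi) * (t * c)) 0 y := hasDerivAt_const _ _
    have hden : HasDerivAt (fun y' : ℝ => (y' + t * a) ^ 2 + t ^ 2 * c ^ 2)
        (2 * (y + t * a)) y := by
      have h1 : HasDerivAt (fun y' : ℝ => y' + t * a) 1 y := (hasDerivAt_id y).add_const (t * a)
      have h2 := (h1.pow 2).add_const (t ^ 2 * c ^ 2)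
      refine h2.congr_deriv ?_
      push_cast
      ring
    have h := hnum.div hden (hD y t ht.ne')
    refine h.congr_deriv ?_
    field_simp
    ring
  -- second derivative in y at x
  have hC : HasDerivAt (fun y : ℝ => (1 / Real.pi) * (((-2) * c * y * t - 2 * a * c * t ^ 2) /
        (((y + t * a) ^ 2 + t ^ 2 * c ^ 2) ^ 2)))
      ((1 / Real.pi) * (((6:ℝ)*a^4*c*t^5 + (24:ℝ)*a^3*c*x*t^4 + (4:ℝ)*a^2*c^3*t^5 + (36:ℝ)*a^2*c*x^2*t^3 + (8:ℝ)*a*c^3*x*t^4 + (24:ℝ)*a*c*x^3*t^2 - (2:ℝ)*c^5*t^5 + (4:ℝ)*c^3*x^2*t^3 + (6:ℝ)*c*x^4*t) /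
        (((x + t * a) ^ 2 + t ^ 2 * c ^ 2) ^ 4))) x := by
    have hnum : HasDerivAt (fun y : ℝ => (-2) * c * y * t - 2 * a * c * t ^ 2)
        ((-2) * c * t) x := by
      have h1 : HasDerivAt (fun y : ℝ => (-2) * c * y * t) ((-2) * c * t) x := by
        have := ((hasDerivAt_id x).const_mul ((-2) * c)).mul_const t
        exact this.congr_deriv (by ring)
      simpa using h1.sub_const (2 * a * c * t ^ 2)
    have hd1 : HasDerivAt (fun y : ℝ => (y + t * a) ^ 2 + t ^ 2 * c ^ 2)
        (2 * (x + t * a)) x := by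
      have h1 : HasDerivAt (fun y : ℝ => y + t * a) 1 x := (hasDerivAt_id x).add_const (t * a)
      have h2 := (h1.pow 2).add_const (t ^ 2 * c ^ 2)
      refine h2.congr_deriv ?_
      push_cast
      ring
    have hden := hd1.pow 2
    have h := (hnum.div hden hD2).const_mul (1 / Real.pi)
    refine h.congr_deriv ?_
    simp only [Pi.pow_apply]
    field_simp
    ring
  -- mixed derivative
  have hM : HasDerivAt (fun y : ℝ => (1 / Real.pi) * ((c * y ^ 2 - c ^ 3 * t ^ 2 - a ^ 2 * c * t ^ 2) /
        (((y + t * a) ^ 2 + t ^ 2 * c ^ 2) ^ 2)))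
      ((1 / Real.pi) * (((4:ℝ)*a^5*c*t^5 + (14:ℝ)*a^4*c*x*t^4 + (8:ℝ)*a^3*c^3*t^5 + (16:ℝ)*a^3*c*x^2*t^3 + (20:ℝ)*a^2*c^3*x*t^4 + (4:ℝ)*a^2*c*x^3*t^2 + (4:ℝ)*a*c^5*t^5 + (16:ℝ)*a*c^3*x^2*t^3 - (4:ℝ)*a*c*x^4*t + (6:ℝ)*c^5*x*t^4 + (4:ℝ)*c^3*x^3*t^2 - (2:ℝ)*c*x^5) /
        (((x + t * a) ^ 2 + t ^ 2 * c ^ 2) ^ 4))) x := by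
    have hnum : HasDerivAt (fun y : ℝ => c * y ^ 2 - c ^ 3 * t ^ 2 - a ^ 2 * c * t ^ 2)
        (c * (2 * x)) x := by
      have h1 : HasDerivAt (fun y : ℝ => y ^ 2) (2 * x) x := by
        simpa using hasDerivAt_pow 2 x
      simpa using ((h1.const_mul c).sub_const (c ^ 3 * t ^ 2)).sub_const (a ^ 2 * c * t ^ 2)
    have hd1 : HasDerivAt (fun y : ℝ => (y + t * a) ^ 2 + t ^ 2 * c ^ 2)
        (2 * (x + t * a)) x := by
      have h1 : HasDerivAt (fun y : ℝ => y + t * a) 1 x := (hasDerivAt_id x).add_const (t * a)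
      have h2 := (h1.pow 2).add_const (t ^ 2 * c ^ 2)
      refine h2.congr_deriv ?_
      push_cast
      ring
    have hden := hd1.pow 2
    have h := (hnum.div hden hD2).const_mul (1 / Real.pi)
    refine h.congr_deriv ?_
    simp only [Pi.pow_apply]
    field_simp
    ring
  -- rewrite the three pieces
  have e1 : iteratedDeriv 2
      (fun s : ℝ => (1 / Real.pi) * (s * c) / ((x + s * a) ^ 2 + s ^ 2 * c ^ 2)) t
      = (1 / Real.pi) * (((2:ℝ)*a^6*c*t^5 + (4:ℝ)*a^5*c*x*t^4 + (6:ℝ)*a^4*c^3*t^5 - (4:ℝ)*a^4*c*x^2*t^3 + (8:ℝ)*a^3*c^3*x*t^4 - (16:ℝ)*a^3*c*x^3*t^2 + (6:ℝ)*a^2*c^5*t^5 - (8:ℝ)*a^2*c^3*x^2*t^3 - (14:ℝ)*a^2*c*x^4*t + (4:ℝ)*a*c^5*x*t^4 - (16:ℝ)*a*c^3*x^3*t^2 - (4:ℝ)*a*c*x^5 + (2:ℝ)*c^7*t^5 - (4:ℝ)*c^5*x^2*t^3 - (6:ℝ)*c^3*x^4*t) /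
        (((x + t * a) ^ 2 + t ^ 2 * c ^ 2) ^ 4)) := by
    rw [h2d]
    have hev : deriv (fun s : ℝ => (1 / Real.pi) * (s * c) / ((x + s * a) ^ 2 + s ^ 2 * c ^ 2))
        =ᶠ[nhds t] fun s : ℝ => (1 / Real.pi) * ((c * x ^ 2 - c ^ 3 * s ^ 2 - a ^ 2 * c * s ^ 2) /
          (((x + s * a) ^ 2 + s ^ 2 * c ^ 2) ^ 2)) := by
      filter_upwards [isOpen_Ioi.mem_nhds ht] with s hs using (hA x s (ne_of_gt hs)).deriv
    rw [hev.deriv_eq, hB.deriv]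
  have e2 : iteratedDeriv 2
      (fun y : ℝ => (1 / Real.pi) * (t * c) / ((y + t * a) ^ 2 + t ^ 2 * c ^ 2)) x
      = (1 / Real.pi) * (((6:ℝ)*a^4*c*t^5 + (24:ℝ)*a^3*c*x*t^4 + (4:ℝ)*a^2*c^3*t^5 + (36:ℝ)*a^2*c*x^2*t^3 + (8:ℝ)*a*c^3*x*t^4 + (24:ℝ)*a*c*x^3*t^2 - (2:ℝ)*c^5*t^5 + (4:ℝ)*c^3*x^2*t^3 + (6:ℝ)*c*x^4*t) /
        (((x + t * a) ^ 2 + t ^ 2 * c ^ 2) ^ 4)) := by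
    rw [h2d]
    have hev : deriv (fun y : ℝ => (1 / Real.pi) * (t * c) / ((y + t * a) ^ 2 + t ^ 2 * c ^ 2))
        = fun y : ℝ => (1 / Real.pi) * (((-2) * c * y * t - 2 * a * c * t ^ 2) /
          (((y + t * a) ^ 2 + t ^ 2 * c ^ 2) ^ 2)) := funext fun y => (hAx y).deriv
    rw [hev, hC.deriv]
  have e3 : (fun y : ℝ =>
        deriv (fun s : ℝ => (1 / Real.pi) * (s * c) / ((y + s * a) ^ 2 + s ^ 2 * c ^ 2)) t)
      = fun y : ℝ => (1 / Real.pi) * ((c * y ^ 2 - c ^ 3 * t ^ 2 - a ^ 2 * c * t ^ 2) /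
          (((y + t * a) ^ 2 + t ^ 2 * c ^ 2) ^ 2)) := funext fun y => (hA y t ht.ne').deriv
  rw [e1, e2, e3, hM.deriv]
  have hkey : ((2:ℝ)*a^6*c*t^5 + (4:ℝ)*a^5*c*x*t^4 + (6:ℝ)*a^4*c^3*t^5 - (4:ℝ)*a^4*c*x^2*t^3 + (8:ℝ)*a^3*c^3*x*t^4 - (16:ℝ)*a^3*c*x^3*t^2 + (6:ℝ)*a^2*c^5*t^5 - (8:ℝ)*a^2*c^3*x^2*t^3 - (14:ℝ)*a^2*c*x^4*t + (4:ℝ)*a*c^5*x*t^4 - (16:ℝ)*a*c^3*x^3*t^2 - (4:ℝ)*a*c*x^5 + (2:ℝ)*c^7*t^5 - (4:ℝ)*c^5*x^2*t^3 - (6:ℝ)*c^3*x^4*t)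
      + ((6:ℝ)*a^4*c*t^5 + (24:ℝ)*a^3*c*x*t^4 + (4:ℝ)*a^2*c^3*t^5 + (36:ℝ)*a^2*c*x^2*t^3 + (8:ℝ)*a*c^3*x*t^4 + (24:ℝ)*a*c*x^3*t^2 - (2:ℝ)*c^5*t^5 + (4:ℝ)*c^3*x^2*t^3 + (6:ℝ)*c*x^4*t)
      = 2 * a * ((4:ℝ)*a^5*c*t^5 + (14:ℝ)*a^4*c*x*t^4 + (8:ℝ)*a^3*c^3*t^5 + (16:ℝ)*a^3*c*x^2*t^3 + (20:ℝ)*a^2*c^3*x*t^4 + (4:ℝ)*a^2*c*x^3*t^2 + (4:ℝ)*a*c^5*t^5 + (16:ℝ)*a*c^3*x^2*t^3 - (4:ℝ)*a*c*x^4*t + (6:ℝ)*c^5*x*t^4 + (4:ℝ)*c^3*x^3*t^2 - (2:ℝ)*c*x^5) := by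
    linear_combination (-(6:ℝ)*a^4*c*t^5 - (24:ℝ)*a^3*c*x*t^4 - (4:ℝ)*a^2*c^3*t^5 - (36:ℝ)*a^2*c*x^2*t^3 - (8:ℝ)*a*c^3*x*t^4 - (24:ℝ)*a*c*x^3*t^2 + (2:ℝ)*c^5*t^5 - (4:ℝ)*c^3*x^2*t^3 - (6:ℝ)*c*x^4*t) * hac
  linear_combination (1 / Real.pi) * (((x + t * a) ^ 2 + t ^ 2 * c ^ 2) ^ 4)⁻¹ * hkey

theorem stmt_13 (m : ℕ) (hm : 1 ≤ m) (x t : ℝ) (ht : 0 < t) :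
    iteratedDeriv 2
        (fun s : ℝ => (1 / Real.pi) * (s * Real.cos (Real.pi / (2 * m))) /
          ((x + s * Real.sin (Real.pi / (2 * m))) ^ 2 + s ^ 2 * Real.cos (Real.pi / (2 * m)) ^ 2)) t
      + iteratedDeriv 2
        (fun y : ℝ => (1 / Real.pi) * (t * Real.cos (Real.pi / (2 * m))) /
          ((y + t * Real.sin (Real.pi / (2 * m))) ^ 2 + t ^ 2 * Real.cos (Real.pi / (2 * m)) ^ 2)) x
    = 2 * Real.sin (Real.pi / (2 * m)) *
        deriv (fun y : ℝ =>
          deriv (fun s : ℝ => (1 / Real.pi) * (s * Real.cos (Real.pi / (2 * m))) /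
            ((y + s * Real.sin (Real.pi / (2 * m))) ^ 2 + s ^ 2 * Real.cos (Real.pi / (2 * m)) ^ 2)) t) x := by
  rcases eq_or_lt_of_le hm with h1 | h2
  · -- m = 1 : cos (π/2) = 0 and everything vanishes
    subst h1
    have hcos : Real.cos (Real.pi / (2 * ((1 : ℕ) : ℝ))) = 0 := by
      norm_num [Real.cos_pi_div_two]
    simp only [hcos, mul_zero, zero_div, zero_mul, mul_div_assoc]
    simp [iteratedDeriv_succ, iteratedDeriv_zero]
  · -- m ≥ 2 : cos (π/(2m)) > 0
    have hm2 : (2 : ℝ) ≤ (m : ℝ) := by exact_mod_cast h2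
    have hpos : 0 < Real.pi / (2 * (m : ℝ)) := by
      apply div_pos Real.pi_pos
      linarith
    have hlt : Real.pi / (2 * (m : ℝ)) < Real.pi / 2 := by
      apply div_lt_div_of_pos_left Real.pi_pos (by norm_num)
      linarith
    have hc : 0 < Real.cos (Real.pi / (2 * (m : ℝ))) := by
      apply Real.cos_pos_of_mem_Ioo
      constructor
      · linarith [Real.pi_pos]
      · exact hlt
    exact cauchy_pde_key (Real.sin (Real.pi / (2 * m))) (Real.cos (Real.pi / (2 * m))) x t
      hc.ne' ht (Real.sin_sq_add_cos_sq _)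
end
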